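/- Let L: ℝ × ℝ → ℝ be any loss function, (x_t, y_t)_{t=1}^n training data in ℝ^d × ℝ, and λ > 0. Then the infimum over v ∈ ℝ^H and u_1,…,u_H ∈ ℝ^d of Σ_t L(y_t, Σ_h v_h·[⟨u_h, x_t⟩]_+) + (λ/2)·Σ_h (‖u_h‖² + v_h²) equals the infimum of Σ_t L(y_t, Σ_h v_h·[⟨u_h, x_t⟩]_+) + λ·Σ_h |v_h| subject to ‖u_h‖ ≤ 1 for all h. -/

import Mathlib

lemma relu_smul {d : ℕ} (c : ℝ) (hc : 0 ≤ c) (u xt : EuclideanSpace ℝ (Fin d)) :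
    max (inner ℝ (c • u) xt : ℝ) 0 = c * max (inner ℝ u xt : ℝ) 0 := by
  rw [real_inner_smul_left, mul_max_of_nonneg _ _ hc, mul_zero]

theorem two_layer_weight_decay_eq_l1 {d H n : ℕ} (L : ℝ → ℝ → ℝ)
    (x : Fin n → EuclideanSpace ℝ (Fin d)) (y : Fin n → ℝ)
    (lam : ℝ) (hlam : 0 < lam) :
    sInf {r : ℝ | ∃ (v : Fin H → ℝ) (u : Fin H → EuclideanSpace ℝ (Fin d)),
        r = (∑ t, L (y t) (∑ h, v h * max (inner ℝ (u h) (x t) : ℝ) 0))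
          + (lam / 2) * ∑ h, (‖u h‖ ^ 2 + (v h) ^ 2)} =
    sInf {r : ℝ | ∃ (v : Fin H → ℝ) (u : Fin H → EuclideanSpace ℝ (Fin d)),
        (∀ h, ‖u h‖ ≤ 1) ∧
        r = (∑ t, L (y t) (∑ h, v h * max (inner ℝ (u h) (x t) : ℝ) 0))
          + lam * ∑ h, |v h|} := by
  refine csInf_eq_csInf_of_forall_exists_le ?_ ?_
  · -- every element of S1 dominates an element of S2
    rintro a ⟨v, u, rfl⟩
    refine ⟨_, ⟨fun h => v h * ‖u h‖, fun h => ‖u h‖⁻¹ • u h, ?_, rfl⟩, ?_⟩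
    · intro h
      rcases eq_or_ne (‖u h‖) 0 with h0 | h0
      · simp [h0]
      · rw [norm_smul, norm_inv, norm_norm, inv_mul_cancel₀ h0]
    · have hloss : ∀ t, (∑ h, (v h * ‖u h‖) * max (inner ℝ ((‖u h‖⁻¹ • u h)) (x t) : ℝ) 0)
          = ∑ h, v h * max (inner ℝ (u h) (x t) : ℝ) 0 := by
        intro t
        refine Finset.sum_congr rfl fun h _ => ?_
        rcases eq_or_ne (‖u h‖) 0 with h0 | h0
        · have : u h = 0 := norm_eq_zero.mp h0
          simp [this]
        · rw [relu_smul _ (inv_nonneg.mpr (norm_nonneg _))]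
          field_simp
      have hpen : lam * ∑ h, |v h * ‖u h‖| ≤ (lam / 2) * ∑ h, (‖u h‖ ^ 2 + (v h) ^ 2) := by
        rw [Finset.mul_sum, Finset.mul_sum]
        refine Finset.sum_le_sum fun h _ => ?_
        have h1 : |v h * ‖u h‖| = |v h| * ‖u h‖ := by
          rw [abs_mul, abs_of_nonneg (norm_nonneg _)]
        rw [h1]
        nlinarith [sq_nonneg (‖u h‖ - |v h|), sq_abs (v h), abs_nonneg (v h),
          norm_nonneg (u h), hlam.le]
      simp only [hloss]
      linarith
  · -- every element of S2 dominates an element of S1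
    rintro b ⟨v, u, hu, rfl⟩
    refine ⟨_, ⟨fun h => v h / Real.sqrt |v h|, fun h => Real.sqrt |v h| • u h, rfl⟩, ?_⟩
    have hloss : ∀ t, (∑ h, (v h / Real.sqrt |v h|) * max (inner ℝ ((Real.sqrt |v h| • u h)) (x t) : ℝ) 0)
        = ∑ h, v h * max (inner ℝ (u h) (x t) : ℝ) 0 := by
      intro t
      refine Finset.sum_congr rfl fun h _ => ?_
      rcases eq_or_ne (v h) 0 with h0 | h0
      · simp [h0]
      · have hs : Real.sqrt |v h| ≠ 0 := ne_of_gt (Real.sqrt_pos.mpr (abs_pos.mpr h0))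
        rw [relu_smul _ (Real.sqrt_nonneg _)]
        field_simp
    have hpen : (lam / 2) * ∑ h, (‖Real.sqrt |v h| • u h‖ ^ 2 + (v h / Real.sqrt |v h|) ^ 2)
        ≤ lam * ∑ h, |v h| := by
      rw [Finset.mul_sum, Finset.mul_sum]
      refine Finset.sum_le_sum fun h _ => ?_
      rcases eq_or_ne (v h) 0 with h0 | h0
      · simp [h0]
      · have hvpos : 0 < |v h| := abs_pos.mpr h0
        have hs : (Real.sqrt |v h|) ^ 2 = |v h| := Real.sq_sqrt (abs_nonneg _)
        have hn : ‖Real.sqrt |v h| • u h‖ ^ 2 = |v h| * ‖u h‖ ^ 2 := by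
          rw [norm_smul, Real.norm_eq_abs, abs_of_nonneg (Real.sqrt_nonneg _), mul_pow, hs]
        have hd : (v h / Real.sqrt |v h|) ^ 2 = |v h| := by
          rw [div_pow, hs, ← sq_abs, sq, mul_div_assoc, div_self hvpos.ne', mul_one]
        rw [hn, hd]
        have hu2 : ‖u h‖ ^ 2 ≤ 1 := by nlinarith [hu h, norm_nonneg (u h)]
        have h1 : |v h| * ‖u h‖ ^ 2 ≤ |v h| := mul_le_of_le_one_right hvpos.le hu2
        nlinarith [hlam.le]
    simp only [hloss]
    linarith
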